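/- (Explicit solution of the modulation ODE system) Let α > 0, ℓ ∈ ℕ* with 2ℓ > α, and let L ≥ ℓ be an integer. Define c_1 = ℓ/(2ℓ-α), c_{j+1} = -α(ℓ-j)/(2ℓ-α) · c_j for 1 ≤ j ≤ ℓ-1, and c_j = 0 for j ≥ ℓ+1. Then b_j(s) := c_j/s^j for 1 ≤ j ≤ L solves, for all s > 0, the system (b_j)' + (2j-α) b_1 b_j - b_{j+1} = 0 for 1 ≤ j ≤ L, with the convention b_{L+1} ≡ 0. -/

import Mathlib

/-- the explicit profile `b_j(s) = c_j/s^j` solves the modulation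
ODE system `(b_j)' + (2j-α) b_1 b_j - b_{j+1} = 0`, `1 ≤ j ≤ L`, with the
convention `b_{L+1} ≡ 0` (note `c_{L+1} = 0` since `L ≥ ℓ`). -/
theorem modulation_ode_solution (α : ℝ) (hα : 0 < α) (ℓ L : ℕ)
    (hℓ : 1 ≤ ℓ) (hαℓ : α < 2 * (ℓ : ℝ)) (hL : ℓ ≤ L)
    (c : ℕ → ℝ) (hc1 : c 1 = (ℓ : ℝ) / (2 * (ℓ : ℝ) - α))
    (hcrec : ∀ j : ℕ, 1 ≤ j → j ≤ ℓ - 1 →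
      c (j + 1) = -(α * ((ℓ : ℝ) - (j : ℝ)) / (2 * (ℓ : ℝ) - α)) * c j)
    (hc0 : ∀ j : ℕ, ℓ + 1 ≤ j → c j = 0) :
    ∀ j : ℕ, 1 ≤ j → j ≤ L → ∀ s : ℝ, 0 < s →
      deriv (fun t : ℝ => c j / t ^ j) s
        + (2 * (j : ℝ) - α) * (c 1 / s) * (c j / s ^ j)
        - c (j + 1) / s ^ (j + 1) = 0 := by
  have hne : (2 * (ℓ : ℝ) - α) ≠ 0 := by linarith
  -- key algebraic identity
  have key : ∀ j : ℕ, 1 ≤ j →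
      c (j + 1) = ((2 * (j : ℝ) - α) * c 1 - (j : ℝ)) * c j := by
    intro j hj
    rcases lt_trichotomy j ℓ with h | h | h
    · have hj' : j ≤ ℓ - 1 := Nat.le_sub_one_of_lt h
      rw [hcrec j hj hj', hc1]
      field_simp
      linear_combination (-((j : ℝ) * c j)) * mul_inv_cancel₀ hne
    · subst h
      rw [hc0 (j + 1) (le_refl _), hc1]
      field_simp
      ring
    · rw [hc0 j (by omega), hc0 (j + 1) (by omega)]
      ring
  intro j hj hjL s hs
  have hs0 : s ≠ 0 := ne_of_gt hs
  obtain ⟨k, rfl⟩ : ∃ k, j = k + 1 := ⟨j - 1, by omega⟩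
  have hder : HasDerivAt (fun t : ℝ => c (k + 1) / t ^ (k + 1))
      (c (k + 1) * (-(((k : ℝ) + 1) * s ^ k) / (s ^ (k + 1)) ^ 2)) s := by
    have h1 : HasDerivAt (fun t : ℝ => t ^ (k + 1)) (((k : ℝ) + 1) * s ^ k) s := by
      simpa using hasDerivAt_pow (k + 1) s
    have h2 := (h1.inv (pow_ne_zero _ hs0)).const_mul (c (k + 1))
    simpa [div_eq_mul_inv] using h2
  rw [hder.deriv, key (k + 1) (by omega)]
  have hpow : (s ^ (k + 1)) ≠ 0 := pow_ne_zero _ hs0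
  field_simp
  push_cast
  ring
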